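/- Let k ≥ 2 and let P ∈ St_{2^k} be a standard tableau of shape 2^k that is not degenerate, i.e. there exists 1 ≤ i < k with P(i,1)+1 ≠ P(i+1,1) and P(i,2)+1 ≠ P(i+1,2). Then full_n^P ≥ 2 for all n ≥ 3. -/

import Mathlib

/-- `F` is a filling of the `k × n` rectangle (row `i`, `1 ≤ i ≤ k`, counted from the
bottom; column `j`, `1 ≤ j ≤ n`) with the integers `1, …, kn`, each used exactly once,
whose entries strictly increase up each column.  Cells outside the rectangle carry `0`. -/
def IsFilling (n k : ℕ) (F : ℕ → ℕ → ℕ) : Prop :=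
  (∀ i j, F i j ≠ 0 → 1 ≤ i ∧ i ≤ k ∧ 1 ≤ j ∧ j ≤ n) ∧
  Set.BijOn (fun p : ℕ × ℕ => F p.1 p.2) (Set.Icc 1 k ×ˢ Set.Icc 1 n) (Set.Icc 1 (k * n)) ∧
  ∀ i j, 1 ≤ i → i < k → 1 ≤ j → j ≤ n → F i j < F (i + 1) j

/-- The entries of `F` in columns `i, …, i + j - 1` are in the same relative order as the
`k × j` pattern `P`; i.e. `F` has a `P`-match starting at position `i`. -/
def MatchAt (j k : ℕ) (P F : ℕ → ℕ → ℕ) (i : ℕ) : Prop :=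
  ∀ a b c d, 1 ≤ a → a ≤ k → 1 ≤ b → b ≤ j → 1 ≤ c → c ≤ k → 1 ≤ d → d ≤ j →
    (F a (i - 1 + b) < F c (i - 1 + d) ↔ P a b < P c d)

/-- `full_n^Υ`: the number of fillings `F ∈ F_{n,k}` having `Υ`-matches starting at
every position `1, …, n-1` (for two-column patterns `Υ ⊆ F_{2,k}`). -/
noncomputable def fullCount (n k : ℕ) (U : Set (ℕ → ℕ → ℕ)) : ℕ :=
  Nat.card {F : ℕ → ℕ → ℕ // IsFilling n k F ∧
    ∀ i, 1 ≤ i → i ≤ n - 1 → ∃ P ∈ U, MatchAt 2 k P F i}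

namespace Stmt17Aux

/-- `dd k P i` = number of right-column values of `P` below `P i 1`. -/
def dd (k : ℕ) (P : ℕ → ℕ → ℕ) (i : ℕ) : ℕ :=
  ((Finset.Icc 1 k).filter (fun c => P c 2 < P i 1)).card

/-- Recursive construction of row offsets. -/
def X (k b c : ℕ) (P : ℕ → ℕ → ℕ) : ℕ → ℕ → ℚ
  | 0 => fun _ => 0
  | m + 1 => fun j =>
      if j = m + 1 then
        (if j = b then X k b c P m c + 2
         else if dd k P j + 1 = j then X k b c P m m + 2
         else (max (X k b c P m m) (X k b c P m (dd k P j) + 1)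
               + (X k b c P m (dd k P j + 1) + 1)) / 2)
      else X k b c P m j

def xx (k b c : ℕ) (P : ℕ → ℕ → ℕ) (j : ℕ) : ℚ := X k b c P k j

lemma X_stab (k b c : ℕ) (P : ℕ → ℕ → ℕ) :
    ∀ m' m j, m ≤ m' → j ≤ m → X k b c P m' j = X k b c P m j := by
  intro m'
  induction m' with
  | zero => intro m j h hj; interval_cases m; rfl
  | succ mm ih =>
    intro m j h hj
    rcases Nat.eq_or_lt_of_le h with rfl | h'
    · rfl
    · have hstep : X k b c P (mm + 1) j = X k b c P mm j := by
        simp only [X]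
        rw [if_neg (by omega)]
      rw [hstep, ih m j (by omega) hj]

lemma xx_of_le (k b c : ℕ) (P : ℕ → ℕ → ℕ) {m j : ℕ} (hm : m ≤ k) (hj : j ≤ m) :
    xx k b c P j = X k b c P m j := X_stab k b c P k m j hm hj

lemma xx_zero (k b c : ℕ) (P : ℕ → ℕ → ℕ) : xx k b c P 0 = 0 := by
  rw [xx_of_le k b c P (Nat.zero_le k) (le_refl 0)]
  rfl

lemma xx_eq_b (k b c : ℕ) (P : ℕ → ℕ → ℕ) (hb1 : 1 ≤ b) (hbk : b ≤ k) (hcb : c < b) :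
    xx k b c P b = xx k b c P c + 2 := by
  obtain ⟨m, rfl⟩ : ∃ m, b = m + 1 := ⟨b - 1, by omega⟩
  rw [xx_of_le k (m+1) c P hbk (le_refl (m+1))]
  simp only [X]
  rw [if_pos trivial, if_pos trivial, ← xx_of_le k (m+1) c P (show m ≤ k by omega) (show c ≤ m by omega)]

lemma xx_eq_two (k b c : ℕ) (P : ℕ → ℕ → ℕ) {i : ℕ} (h1 : 1 ≤ i) (hik : i ≤ k)
    (hne : i ≠ b) (hd : dd k P i + 1 = i) :
    xx k b c P i = xx k b c P (i - 1) + 2 := by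
  obtain ⟨m, rfl⟩ : ∃ m, i = m + 1 := ⟨i - 1, by omega⟩
  rw [xx_of_le k b c P hik (le_refl (m+1))]
  simp only [X]
  rw [if_pos trivial, if_neg hne, if_pos hd, ← xx_of_le k b c P (show m ≤ k by omega) (show m ≤ m by omega)]
  simp

lemma xx_eq_mid (k b c : ℕ) (P : ℕ → ℕ → ℕ) {i : ℕ} (h1 : 1 ≤ i) (hik : i ≤ k)
    (hne : i ≠ b) (hd : dd k P i + 1 ≠ i) (hdlt : dd k P i < i) :
    xx k b c P i = (max (xx k b c P (i - 1)) (xx k b c P (dd k P i) + 1)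
      + (xx k b c P (dd k P i + 1) + 1)) / 2 := by
  obtain ⟨m, rfl⟩ : ∃ m, i = m + 1 := ⟨i - 1, by omega⟩
  rw [xx_of_le k b c P hik (le_refl (m+1))]
  simp only [X]
  rw [if_pos trivial, if_neg hne, if_neg hd,
    ← xx_of_le k b c P (show m ≤ k by omega) (le_refl m),
    ← xx_of_le k b c P (show m ≤ k by omega) (show dd k P (m+1) ≤ m by omega),
    ← xx_of_le k b c P (show m ≤ k by omega) (show dd k P (m+1) + 1 ≤ m by omega)]
  simp




def keyF (k b c : ℕ) (P : ℕ → ℕ → ℕ) (p : ℕ × ℕ) : ℚ := xx k b c P p.1 + p.2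

def grid (k n : ℕ) : Finset (ℕ × ℕ) := Finset.Icc 1 k ×ˢ Finset.Icc 1 n

def relK (key : ℕ × ℕ → ℚ) (tb : ℕ → ℕ) (p q : ℕ × ℕ) : Prop :=
  key p < key q ∨ (key p = key q ∧ tb p.2 < tb q.2)

instance (key : ℕ × ℕ → ℚ) (tb : ℕ → ℕ) (p q : ℕ × ℕ) : Decidable (relK key tb p q) := by
  unfold relK; infer_instance

lemma relK_trans {key : ℕ × ℕ → ℚ} {tb : ℕ → ℕ} {p q r : ℕ × ℕ}
    (h1 : relK key tb p q) (h2 : relK key tb q r) : relK key tb p r := by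
  rcases h1 with h1 | ⟨e1, l1⟩ <;> rcases h2 with h2 | ⟨e2, l2⟩
  · exact Or.inl (h1.trans h2)
  · exact Or.inl (lt_of_lt_of_eq h1 e2)
  · exact Or.inl (lt_of_eq_of_lt e1 h2)
  · exact Or.inr ⟨e1.trans e2, l1.trans l2⟩

lemma relK_irrefl {key : ℕ × ℕ → ℚ} {tb : ℕ → ℕ} {p : ℕ × ℕ} : ¬ relK key tb p p := by
  unfold relK; simp

lemma relK_asymm {key : ℕ × ℕ → ℚ} {tb : ℕ → ℕ} {p q : ℕ × ℕ}
    (h1 : relK key tb p q) (h2 : relK key tb q p) : False :=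
  relK_irrefl (relK_trans h1 h2)

/-- rank of a cell w.r.t. the strict order `relK key tb` on the grid. -/
def rk (k n : ℕ) (key : ℕ × ℕ → ℚ) (tb : ℕ → ℕ) (p : ℕ × ℕ) : ℕ :=
  if p ∈ grid k n then ((grid k n).filter (fun r => relK key tb r p)).card + 1 else 0

lemma grid_card (k n : ℕ) : (grid k n).card = k * n := by
  rw [grid, Finset.card_product, Nat.card_Icc, Nat.card_Icc, Nat.add_sub_cancel,
    Nat.add_sub_cancel]

section ranklemmas

variable {k n : ℕ} {key : ℕ × ℕ → ℚ} {tb : ℕ → ℕ}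

lemma rk_lt {p q : ℕ × ℕ} (hp : p ∈ grid k n) (hq : q ∈ grid k n)
    (h : relK key tb p q) : rk k n key tb p < rk k n key tb q := by
  unfold rk
  rw [if_pos hp, if_pos hq]
  have hsub : (grid k n).filter (fun r => relK key tb r p) ⊆
      (grid k n).filter (fun r => relK key tb r q) := by
    intro r hr
    rw [Finset.mem_filter] at hr ⊢
    exact ⟨hr.1, relK_trans hr.2 h⟩
  have hlt : (grid k n).filter (fun r => relK key tb r p) ⊂
      (grid k n).filter (fun r => relK key tb r q) := by
    rw [Finset.ssubset_iff_of_subset hsub]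
    refine ⟨p, Finset.mem_filter.mpr ⟨hp, h⟩, fun hc => ?_⟩
    exact relK_irrefl (Finset.mem_filter.mp hc).2
  exact Nat.add_lt_add_right (Finset.card_lt_card hlt) 1

lemma rk_lt_iff (htri : ∀ p ∈ grid k n, ∀ q ∈ grid k n,
      ¬relK key tb p q → ¬relK key tb q p → p = q)
    {p q : ℕ × ℕ} (hp : p ∈ grid k n) (hq : q ∈ grid k n) :
    rk k n key tb p < rk k n key tb q ↔ relK key tb p q := by
  constructor
  · intro h
    by_cases h1 : relK key tb p q
    · exact h1
    by_cases h2 : relK key tb q p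
    · exact absurd h (not_lt.mpr (le_of_lt (rk_lt hq hp h2)))
    · rw [htri p hp q hq h1 h2] at h; exact absurd h (lt_irrefl _)
  · exact rk_lt hp hq

lemma rk_bijOn (htri : ∀ p ∈ grid k n, ∀ q ∈ grid k n,
      ¬relK key tb p q → ¬relK key tb q p → p = q) :
    Set.BijOn (rk k n key tb) (↑(grid k n)) (Set.Icc 1 (k * n)) := by
  have hmaps : ∀ p ∈ grid k n, rk k n key tb p ∈ Finset.Icc 1 (k * n) := by
    intro p hp
    rw [Finset.mem_Icc]
    unfold rk
    rw [if_pos hp]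
    have hsub : (grid k n).filter (fun r => relK key tb r p) ⊆ (grid k n).erase p := by
      intro r hr
      rw [Finset.mem_filter] at hr
      refine Finset.mem_erase.mpr ⟨fun hc => ?_, hr.1⟩
      exact relK_irrefl (hc ▸ hr.2)
    have h1 : ((grid k n).filter (fun r => relK key tb r p)).card ≤ (grid k n).card - 1 := by
      have := Finset.card_le_card hsub
      rwa [Finset.card_erase_of_mem hp] at this
    have h2 : 1 ≤ (grid k n).card := Finset.card_pos.mpr ⟨p, hp⟩
    rw [grid_card] at h1 h2
    omega
  have hinj : Set.InjOn (rk k n key tb) (↑(grid k n)) := by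
    intro p hp q hq hpq
    rw [Finset.mem_coe] at hp hq
    by_cases h1 : relK key tb p q
    · exact absurd hpq (Nat.ne_of_lt (rk_lt hp hq h1))
    by_cases h2 : relK key tb q p
    · exact absurd hpq.symm (Nat.ne_of_lt (rk_lt hq hp h2))
    · exact htri p hp q hq h1 h2
  refine ⟨?_, hinj, ?_⟩
  · intro p hp
    rw [Finset.mem_coe] at hp
    have := hmaps p hp
    rw [Finset.mem_Icc] at this
    exact Set.mem_Icc.mpr this
  · -- surjectivity
    intro v hv
    rw [Set.mem_Icc] at hv
    have himg : (grid k n).image (rk k n key tb) = Finset.Icc 1 (k * n) := by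
      apply Finset.eq_of_subset_of_card_le
      · intro w hw
        obtain ⟨p, hp, rfl⟩ := Finset.mem_image.mp hw
        exact hmaps p hp
      · rw [Finset.card_image_of_injOn hinj, grid_card, Nat.card_Icc, Nat.add_sub_cancel]
    have : v ∈ (grid k n).image (rk k n key tb) := by
      rw [himg, Finset.mem_Icc]; exact hv
    obtain ⟨p, hp, hpv⟩ := Finset.mem_image.mp this
    exact ⟨p, Finset.mem_coe.mpr hp, hpv⟩

end ranklemmas
end Stmt17Aux


open Stmt17Aux

/-- For a non-degenerate standard tableau `P` of shape `2^k` with `k ≥ 2`,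
`full_n^P ≥ 2` for all `n ≥ 3`. -/
theorem stmt17 (k : ℕ) (hk : 2 ≤ k) (P : ℕ → ℕ → ℕ) (hP : IsFilling 2 k P)
    (hstd : ∀ i, 1 ≤ i → i ≤ k → P i 1 < P i 2)
    (hnd : ∃ i, 1 ≤ i ∧ i < k ∧ P i 1 + 1 ≠ P (i + 1) 1 ∧ P i 2 + 1 ≠ P (i + 1) 2)
    (n : ℕ) (hn : 3 ≤ n) :
    2 ≤ fullCount n k {P} := by
  classical
  obtain ⟨q, hq1, hqk, hg1, hg2⟩ := hnd
  obtain ⟨hPsupp, hPbij, hPcol⟩ := hP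
  -- ### basic facts about P
  have hPmono : ∀ jj a a', 1 ≤ jj → jj ≤ 2 → 1 ≤ a → a < a' → a' ≤ k → P a jj < P a' jj := by
    intro jj a a'
    induction a' with
    | zero => intro _ _ _ h _; omega
    | succ t ih =>
      intro hj1 hj2 ha haa hak
      rcases Nat.lt_or_ge a t with h | h
      · exact lt_trans (ih hj1 hj2 ha h (by omega)) (hPcol t jj (by omega) (by omega) hj1 hj2)
      · have hat : a = t := by omega
        subst hat
        exact hPcol a jj ha (by omega) hj1 hj2
  have hPmonole : ∀ jj a a', 1 ≤ jj → jj ≤ 2 → 1 ≤ a → a ≤ a' → a' ≤ k → P a jj ≤ P a' jj := by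
    intro jj a a' h1 h2 h3 h4 h5
    rcases Nat.eq_or_lt_of_le h4 with rfl | h
    · exact le_refl _
    · exact le_of_lt (hPmono jj a a' h1 h2 h3 h h5)
  have hPmem : ∀ a jj, 1 ≤ a → a ≤ k → 1 ≤ jj → jj ≤ 2 → 1 ≤ P a jj ∧ P a jj ≤ k * 2 := by
    intro a jj h1 h2 h3 h4
    have hm : ((a, jj) : ℕ × ℕ) ∈ Set.Icc 1 k ×ˢ Set.Icc 1 2 :=
      Set.mem_prod.mpr ⟨Set.mem_Icc.mpr ⟨h1, h2⟩, Set.mem_Icc.mpr ⟨h3, h4⟩⟩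
    exact Set.mem_Icc.mp (hPbij.mapsTo hm)
  have hPinj : ∀ a jj a' jj', 1 ≤ a → a ≤ k → 1 ≤ jj → jj ≤ 2 → 1 ≤ a' → a' ≤ k →
      1 ≤ jj' → jj' ≤ 2 → P a jj = P a' jj' → a = a' ∧ jj = jj' := by
    intro a jj a' jj' h1 h2 h3 h4 h5 h6 h7 h8 heq
    have hma : ((a, jj) : ℕ × ℕ) ∈ Set.Icc 1 k ×ˢ Set.Icc 1 2 :=
      Set.mem_prod.mpr ⟨Set.mem_Icc.mpr ⟨h1, h2⟩, Set.mem_Icc.mpr ⟨h3, h4⟩⟩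
    have hmb : ((a', jj') : ℕ × ℕ) ∈ Set.Icc 1 k ×ˢ Set.Icc 1 2 :=
      Set.mem_prod.mpr ⟨Set.mem_Icc.mpr ⟨h5, h6⟩, Set.mem_Icc.mpr ⟨h7, h8⟩⟩
    have := hPbij.injOn hma hmb heq
    exact ⟨congrArg Prod.fst this, congrArg Prod.snd this⟩
  have hPne12 : ∀ a cc, 1 ≤ a → a ≤ k → 1 ≤ cc → cc ≤ k → P a 1 ≠ P cc 2 := by
    intro a cc h1 h2 h3 h4 heq
    have := hPinj a 1 cc 2 h1 h2 (by omega) (by omega) h3 h4 (by omega) (by omega) heq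
    omega
  -- ### facts about dd
  have hfilter_mem : ∀ (i c' : ℕ),
      c' ∈ (Finset.Icc 1 k).filter (fun c => P c 2 < P i 1) ↔
        (1 ≤ c' ∧ c' ≤ k ∧ P c' 2 < P i 1) := by
    intro i c'
    rw [Finset.mem_filter, Finset.mem_Icc]
    tauto
  have hddlt : ∀ i, 1 ≤ i → i ≤ k → dd k P i < i := by
    intro i h1 hik
    have hsub : (Finset.Icc 1 k).filter (fun c => P c 2 < P i 1) ⊆ Finset.Icc 1 (i - 1) := by
      intro c' hc'
      rw [hfilter_mem] at hc'
      rw [Finset.mem_Icc]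
      refine ⟨hc'.1, ?_⟩
      by_contra hcon
      have hle : P i 2 ≤ P c' 2 := hPmonole 2 i c' (by omega) (by omega) h1 (by omega) hc'.2.1
      have := hstd i h1 hik
      omega
    have := Finset.card_le_card hsub
    rw [Nat.card_Icc] at this
    unfold dd
    omega
  have hddmono : ∀ i i', 1 ≤ i → i ≤ i' → i' ≤ k → dd k P i ≤ dd k P i' := by
    intro i i' h1 h2 h3
    apply Finset.card_le_card
    intro c' hc'
    rw [hfilter_mem] at hc' ⊢
    exact ⟨hc'.1, hc'.2.1, lt_of_lt_of_le hc'.2.2 (hPmonole 1 i i' (by omega) (by omega) h1 h2 h3)⟩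
  have hddiff : ∀ a cc, 1 ≤ a → a ≤ k → 1 ≤ cc → cc ≤ k → (P a 1 < P cc 2 ↔ dd k P a < cc) := by
    intro a cc ha hak hc hck
    constructor
    · intro h
      have hsub : (Finset.Icc 1 k).filter (fun c => P c 2 < P a 1) ⊆ Finset.Icc 1 (cc - 1) := by
        intro c' hc'
        rw [hfilter_mem] at hc'
        rw [Finset.mem_Icc]
        refine ⟨hc'.1, ?_⟩
        by_contra hcon
        have : P cc 2 ≤ P c' 2 := hPmonole 2 cc c' (by omega) (by omega) hc (by omega) hc'.2.1
        omega
      have := Finset.card_le_card hsub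
      rw [Nat.card_Icc] at this
      unfold dd
      omega
    · intro h
      by_contra hcon
      have hlt : P cc 2 < P a 1 := by
        have hne := hPne12 a cc ha hak hc hck
        omega
      have hsub : Finset.Icc 1 cc ⊆ (Finset.Icc 1 k).filter (fun c => P c 2 < P a 1) := by
        intro c' hc'
        rw [Finset.mem_Icc] at hc'
        rw [hfilter_mem]
        refine ⟨hc'.1, by omega, ?_⟩
        exact lt_of_le_of_lt (hPmonole 2 c' cc (by omega) (by omega) hc'.1 hc'.2 hck) hlt
      have := Finset.card_le_card hsub
      rw [Nat.card_Icc] at this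
      unfold dd at h
      omega
  -- ### the special rows b and c
  have hPq11 : P q 1 < P (q+1) 1 := hPcol q 1 hq1 hqk (by omega) (by omega)
  have hPq22 : P q 2 < P (q+1) 2 := hPcol q 2 hq1 hqk (by omega) (by omega)
  have hgap1 : P q 1 + 1 < P (q+1) 1 := by omega
  have hgap2 : P q 2 + 1 < P (q+1) 2 := by omega
  have hstdq : P q 1 < P q 2 := hstd q hq1 (by omega)
  have hstdq1 : P (q+1) 1 < P (q+1) 2 := hstd (q+1) (by omega) (by omega)
  -- find c with P c 2 = P q 1 + 1
  obtain ⟨c, hc1, hck, hcval⟩ : ∃ c, 1 ≤ c ∧ c ≤ k ∧ P c 2 = P q 1 + 1 := by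
    have hv : (P q 1 + 1) ∈ Set.Icc 1 (k * 2) := by
      have h2 := (hPmem (q+1) 1 (by omega) (by omega) (by omega) (by omega)).2
      exact Set.mem_Icc.mpr ⟨by omega, by omega⟩
    obtain ⟨p, hp, hval⟩ := hPbij.surjOn hv
    rw [Set.mem_prod, Set.mem_Icc, Set.mem_Icc] at hp
    simp only at hval
    have hp2 : p.2 = 1 ∨ p.2 = 2 := by omega
    rcases hp2 with h | h
    · exfalso
      rw [h] at hval
      have hgt : q < p.1 := by
        by_contra hcon
        have := hPmonole 1 p.1 q (by omega) (by omega) hp.1.1 (by omega) (by omega)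
        omega
      have hlt2 : p.1 < q + 1 := by
        by_contra hcon
        have := hPmonole 1 (q+1) p.1 (by omega) (by omega) (by omega) (by omega) hp.1.2
        omega
      omega
    · exact ⟨p.1, hp.1.1, hp.1.2, h ▸ hval⟩
  -- find b with P b 1 = P q 2 + 1
  obtain ⟨b, hb1, hbk, hbval⟩ : ∃ b, 1 ≤ b ∧ b ≤ k ∧ P b 1 = P q 2 + 1 := by
    have hv : (P q 2 + 1) ∈ Set.Icc 1 (k * 2) := by
      have h2 := (hPmem (q+1) 2 (by omega) (by omega) (by omega) (by omega)).2
      exact Set.mem_Icc.mpr ⟨by omega, by omega⟩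
    obtain ⟨p, hp, hval⟩ := hPbij.surjOn hv
    rw [Set.mem_prod, Set.mem_Icc, Set.mem_Icc] at hp
    simp only at hval
    have hp2 : p.2 = 1 ∨ p.2 = 2 := by omega
    rcases hp2 with h | h
    · exact ⟨p.1, hp.1.1, hp.1.2, h ▸ hval⟩
    · exfalso
      rw [h] at hval
      have hgt : q < p.1 := by
        by_contra hcon
        have := hPmonole 2 p.1 q (by omega) (by omega) hp.1.1 (by omega) (by omega)
        omega
      have hlt2 : p.1 < q + 1 := by
        by_contra hcon
        have := hPmonole 2 (q+1) p.1 (by omega) (by omega) (by omega) (by omega) hp.1.2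
        omega
      omega
  have hcq : c ≤ q := by
    by_contra hcon
    have := hPmonole 2 (q+1) c (by omega) (by omega) (by omega) (by omega) hck
    omega
  have hqb : q < b := by
    by_contra hcon
    have := hPmonole 1 b q (by omega) (by omega) hb1 (by omega) (by omega)
    omega
  have hcb : c < b := lt_of_le_of_lt hcq hqb
  have hb2 : 2 ≤ b := by omega
  have hddb : dd k P b = q := by
    apply le_antisymm
    · have hsub : (Finset.Icc 1 k).filter (fun cc => P cc 2 < P b 1) ⊆ Finset.Icc 1 q := by
        intro c' hc'
        rw [hfilter_mem] at hc'
        rw [Finset.mem_Icc]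
        refine ⟨hc'.1, ?_⟩
        by_contra hcon
        have := hPmonole 2 (q+1) c' (by omega) (by omega) (by omega) (by omega) hc'.2.1
        omega
      have := Finset.card_le_card hsub
      rw [Nat.card_Icc] at this
      unfold dd
      omega
    · have hsub : Finset.Icc 1 q ⊆ (Finset.Icc 1 k).filter (fun cc => P cc 2 < P b 1) := by
        intro c' hc'
        rw [Finset.mem_Icc] at hc'
        rw [hfilter_mem]
        refine ⟨hc'.1, by omega, ?_⟩
        have := hPmonole 2 c' q (by omega) (by omega) hc'.1 hc'.2 (by omega)
        omega
      have := Finset.card_le_card hsub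
      rw [Nat.card_Icc] at this
      unfold dd
      omega
  have hddbm : dd k P (b-1) < q := by
    have hbm1 : 1 ≤ b - 1 := by omega
    have hPbm : P (b-1) 1 < P b 1 := hPmono 1 (b-1) b (by omega) (by omega) hbm1 (by omega) hbk
    have hsub : (Finset.Icc 1 k).filter (fun cc => P cc 2 < P (b-1) 1) ⊆ Finset.Icc 1 (q-1) := by
      intro c' hc'
      rw [hfilter_mem] at hc'
      rw [Finset.mem_Icc]
      refine ⟨hc'.1, ?_⟩
      by_contra hcon
      have := hPmonole 2 q c' (by omega) (by omega) hq1 (by omega) hc'.2.1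
      omega
    have := Finset.card_le_card hsub
    rw [Nat.card_Icc] at this
    unfold dd
    omega
  have hdqc : dd k P q < c := by
    rw [← hddiff q c hq1 (by omega) hc1 hck]
    omega
  have hcdq1 : c ≤ dd k P (q+1) := by
    by_contra hcon
    have := (hddiff (q+1) c (by omega) (by omega) hc1 hck).mpr (by omega)
    omega
  -- ### the offset function x and its properties
  have hxb : xx k b c P b = xx k b c P c + 2 := xx_eq_b k b c P hb1 hbk hcb
  have hgood : ∀ N, N ≤ k → ∀ i, 1 ≤ i → i ≤ N →
      (xx k b c P (i-1) < xx k b c P i ∧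
       xx k b c P (dd k P i) + 1 < xx k b c P i ∧
       xx k b c P i < xx k b c P (dd k P i + 1) + 1) := by
    intro N
    induction N with
    | zero => intro _ i h1 h2; omega
    | succ m ih =>
      intro hNk i h1 h2
      rcases Nat.lt_or_ge i (m+1) with hi | hi
      · exact ih (by omega) i h1 (by omega)
      have hieq : i = m + 1 := by omega
      subst hieq
      -- strict monotonicity up to m
      have hmlt : ∀ a a', a < a' → a' ≤ m → xx k b c P a < xx k b c P a' := by
        intro a a'
        induction a' with
        | zero => intro h _; omega
        | succ t iht =>
          intro haa' ht
          have hA := (ih (by omega) (t+1) (by omega) ht).1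
          simp only [Nat.add_sub_cancel] at hA
          rcases Nat.lt_or_ge a t with h | h
          · exact lt_trans (iht h (by omega)) hA
          · have hat : a = t := by omega
            subst hat
            exact hA
      have hmle : ∀ a a', a ≤ a' → a' ≤ m → xx k b c P a ≤ xx k b c P a' := by
        intro a a' h h'
        rcases Nat.eq_or_lt_of_le h with rfl | h2
        · exact le_refl _
        · exact le_of_lt (hmlt a a' h2 h')
      by_cases hib : m + 1 = b
      · -- the special row b
        have heq : xx k b c P (m+1) = xx k b c P c + 2 := by rw [hib]; exact hxb
        have hqm : q ≤ m := by omega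
        have hcm : c ≤ m := by omega
        have hddmb : dd k P (m+1) = q := by rw [hib]; exact hddb
        have u1 : xx k b c P q < xx k b c P c + 1 := by
          have hCq := (ih (by omega) q hq1 hqm).2.2
          have h2 : xx k b c P (dd k P q + 1) ≤ xx k b c P c :=
            hmle (dd k P q + 1) c (by omega) hcm
          linarith
        have hAgoal : xx k b c P m < xx k b c P (m+1) := by
          have hm1 : 1 ≤ m := by omega
          have hCm := (ih (by omega) m hm1 (le_refl _)).2.2
          have hddm : dd k P m + 1 ≤ q := by
            have h5 : dd k P (b-1) < q := hddbm
            have hbm : b - 1 = m := by omega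
            rw [hbm] at h5
            omega
          have h2 : xx k b c P (dd k P m + 1) ≤ xx k b c P q := hmle _ _ hddm hqm
          linarith
        refine ⟨by simpa using hAgoal, ?_, ?_⟩
        · rw [hddmb, heq]
          linarith
        · rw [hddmb, heq]
          by_cases hqb1 : q + 1 = m + 1
          · rw [hqb1, heq]
            linarith
          · have hq1m : q + 1 ≤ m := by omega
            have hBq1 := (ih (by omega) (q+1) (by omega) hq1m).2.1
            have h2 : xx k b c P c ≤ xx k b c P (dd k P (q+1)) := by
              apply hmle c (dd k P (q+1)) hcdq1
              have := hddlt (q+1) (by omega) (by omega)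
              omega
            linarith
      · by_cases hd2 : dd k P (m+1) + 1 = m + 1
        · have heq := xx_eq_two k b c P (by omega) (by omega) (fun hcon => hib hcon) hd2
          simp only [Nat.add_sub_cancel] at heq
          refine ⟨?_, ?_, ?_⟩
          · simp only [Nat.add_sub_cancel, heq]
            linarith
          · have hddm : dd k P (m+1) = m := by omega
            rw [hddm, heq]
            linarith
          · rw [hd2, heq]
            linarith
        · have hdlt := hddlt (m+1) (by omega) (by omega)
          have hdm : dd k P (m+1) + 1 ≤ m := by omega
          have heq := xx_eq_mid k b c P (by omega) (by omega) (fun hcon => hib hcon) hd2 hdlt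
          simp only [Nat.add_sub_cancel] at heq
          have hm1 : 1 ≤ m := by omega
          have w1 : xx k b c P (dd k P (m+1)) + 1 < xx k b c P (dd k P (m+1) + 1) + 1 := by
            have := hmlt (dd k P (m+1)) (dd k P (m+1) + 1) (by omega) hdm
            linarith
          have w2 : xx k b c P m < xx k b c P (dd k P (m+1) + 1) + 1 := by
            have hCm := (ih (by omega) m hm1 (le_refl _)).2.2
            have hddmle : dd k P m + 1 ≤ dd k P (m+1) + 1 := by
              have := hddmono m (m+1) hm1 (by omega) (by omega)
              omega
            have h2 : xx k b c P (dd k P m + 1) ≤ xx k b c P (dd k P (m+1) + 1) :=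
              hmle _ _ hddmle hdm
            linarith
          have hlu : max (xx k b c P m) (xx k b c P (dd k P (m+1)) + 1) <
              xx k b c P (dd k P (m+1) + 1) + 1 := max_lt w2 w1
          have hl1 : xx k b c P m ≤ max (xx k b c P m) (xx k b c P (dd k P (m+1)) + 1) :=
            le_max_left _ _
          have hl2 : xx k b c P (dd k P (m+1)) + 1 ≤
              max (xx k b c P m) (xx k b c P (dd k P (m+1)) + 1) := le_max_right _ _
          refine ⟨?_, ?_, ?_⟩
          · simp only [Nat.add_sub_cancel, heq]
            linarith
          · rw [heq]; linarith
          · rw [heq]; linarith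
  -- global consequences
  have hxmono : ∀ a a', a < a' → a' ≤ k → xx k b c P a < xx k b c P a' := by
    intro a a'
    induction a' with
    | zero => intro h _; omega
    | succ t iht =>
      intro haa' ht
      have hA := (hgood k (le_refl k) (t+1) (by omega) ht).1
      simp only [Nat.add_sub_cancel] at hA
      rcases Nat.lt_or_ge a t with h | h
      · exact lt_trans (iht h (by omega)) hA
      · have hat : a = t := by omega
        subst hat
        exact hA
  have hxle : ∀ a a', a ≤ a' → a' ≤ k → xx k b c P a ≤ xx k b c P a' := by
    intro a a' h h'
    rcases Nat.eq_or_lt_of_le h with rfl | h2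
    · exact le_refl _
    · exact le_of_lt (hxmono a a' h2 h')
  have hxlt_iff : ∀ a cc, 1 ≤ a → a ≤ k → 1 ≤ cc → cc ≤ k →
      (xx k b c P a < xx k b c P cc + 1 ↔ P a 1 < P cc 2) := by
    intro a cc ha hak hc hck'
    constructor
    · intro h
      by_contra hcon
      have hdge : cc ≤ dd k P a := by
        have h2 : ¬ dd k P a < cc := fun hx => hcon ((hddiff a cc ha hak hc hck').mpr hx)
        omega
      have h3 : xx k b c P cc ≤ xx k b c P (dd k P a) := by
        apply hxle cc (dd k P a) hdge
        have := hddlt a ha hak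
        omega
      have h4 := (hgood k (le_refl k) a ha hak).2.1
      linarith
    · intro h
      have hlt : dd k P a < cc := (hddiff a cc ha hak hc hck').mp h
      have h4 := (hgood k (le_refl k) a ha hak).2.2
      have h3 : xx k b c P (dd k P a + 1) ≤ xx k b c P cc := hxle (dd k P a + 1) cc (by omega) hck'
      linarith
  have hxgt : ∀ a cc, 1 ≤ a → a ≤ k → 1 ≤ cc → cc ≤ k → ¬ P a 1 < P cc 2 →
      xx k b c P cc + 1 < xx k b c P a := by
    intro a cc ha hak hc hck' hcon
    have hdge : cc ≤ dd k P a := by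
      have h2 : ¬ dd k P a < cc := fun hx => hcon ((hddiff a cc ha hak hc hck').mpr hx)
      omega
    have h3 : xx k b c P cc ≤ xx k b c P (dd k P a) := by
      apply hxle cc (dd k P a) hdge
      have := hddlt a ha hak
      omega
    have h4 := (hgood k (le_refl k) a ha hak).2.1
    linarith
  have hxiff : ∀ a cc, a ≤ k → cc ≤ k → (xx k b c P a < xx k b c P cc ↔ a < cc) := by
    intro a cc hak hck'
    constructor
    · intro h
      by_contra hcontra
      have h2 : cc ≤ a := by omega
      rcases Nat.eq_or_lt_of_le h2 with rfl | h3
      · exact absurd h (lt_irrefl _)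
      · exact absurd h (not_lt.mpr (le_of_lt (hxmono cc a h3 hak)))
    · intro h
      exact hxmono a cc h hck'
  -- ### keys, the two linear orders, and the resulting fillings
  have hkeyval : ∀ p : ℕ × ℕ, keyF k b c P p = xx k b c P p.1 + (p.2 : ℚ) := fun p => rfl
  have hmemgrid : ∀ a j, 1 ≤ a → a ≤ k → 1 ≤ j → j ≤ n → ((a, j) ∈ grid k n) := by
    intro a j h1 h2 h3 h4
    rw [grid, Finset.mem_product, Finset.mem_Icc, Finset.mem_Icc]
    exact ⟨⟨h1, h2⟩, ⟨h3, h4⟩⟩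
  have htri : ∀ tb : ℕ → ℕ,
      (∀ j j', 1 ≤ j → j ≤ n → 1 ≤ j' → j' ≤ n → tb j = tb j' → j = j') →
      ∀ p ∈ grid k n, ∀ r ∈ grid k n,
        ¬relK (keyF k b c P) tb p r → ¬relK (keyF k b c P) tb r p → p = r := by
    intro tb htb p hp r hr h1 h2
    rw [grid, Finset.mem_product, Finset.mem_Icc, Finset.mem_Icc] at hp hr
    unfold relK at h1 h2
    push_neg at h1 h2
    have hkeq : keyF k b c P p = keyF k b c P r := le_antisymm h2.1 h1.1
    have htbe : tb p.2 = tb r.2 := le_antisymm (h2.2 hkeq.symm) (h1.2 hkeq)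
    have hj : p.2 = r.2 := htb _ _ hp.2.1 hp.2.2 hr.2.1 hr.2.2 htbe
    have hx12 : xx k b c P p.1 = xx k b c P r.1 := by
      have hk2 := hkeq
      rw [hkeyval, hkeyval, hj] at hk2
      linarith
    have hi : p.1 = r.1 := by
      by_contra hne
      rcases Nat.lt_or_ge p.1 r.1 with h | h
      · exact absurd hx12 (ne_of_lt (hxmono _ _ h hr.1.2))
      · have hlt : r.1 < p.1 := by omega
        exact absurd hx12.symm (ne_of_lt (hxmono _ _ hlt hp.1.2))
    exact Prod.ext hi hj
  have hkey12 : ∀ (tb : ℕ → ℕ) (a cc j : ℕ), 1 ≤ a → a ≤ k → 1 ≤ cc → cc ≤ k →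
      (relK (keyF k b c P) tb (a, j) (cc, j + 1) ↔ P a 1 < P cc 2) := by
    intro tb a cc j ha hak hc hck'
    by_cases hpc : P a 1 < P cc 2
    · simp only [hpc, iff_true]
      left
      rw [hkeyval, hkeyval]
      have := (hxlt_iff a cc ha hak hc hck').mpr hpc
      push_cast
      linarith
    · simp only [hpc, iff_false]
      have hgt := hxgt a cc ha hak hc hck' hpc
      rintro (h | ⟨h, _⟩) <;> rw [hkeyval, hkeyval] at h <;> push_cast at h <;>
        try simp only at h
      all_goals linarith
  have hkey21 : ∀ (tb : ℕ → ℕ) (a cc j : ℕ), 1 ≤ a → a ≤ k → 1 ≤ cc → cc ≤ k →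
      (relK (keyF k b c P) tb (a, j + 1) (cc, j) ↔ P a 2 < P cc 1) := by
    intro tb a cc j ha hak hc hck'
    by_cases hpc : P cc 1 < P a 2
    · have h1 : xx k b c P cc < xx k b c P a + 1 := (hxlt_iff cc a hc hck' ha hak).mpr hpc
      have hfalse : ¬ (P a 2 < P cc 1) := by omega
      simp only [hfalse, iff_false]
      rintro (h | ⟨h, _⟩) <;> rw [hkeyval, hkeyval] at h <;> push_cast at h <;>
        try simp only at h
      all_goals linarith
    · have hne := hPne12 cc a hc hck' ha hak
      have hpa : P a 2 < P cc 1 := by omega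
      have h1 : xx k b c P a + 1 < xx k b c P cc := hxgt cc a hc hck' ha hak hpc
      simp only [hpa, iff_true]
      left
      rw [hkeyval, hkeyval]
      push_cast
      linarith
  have hkey00 : ∀ (tb : ℕ → ℕ) (a cc j jj : ℕ), 1 ≤ a → a ≤ k → 1 ≤ cc → cc ≤ k →
      1 ≤ jj → jj ≤ 2 →
      (relK (keyF k b c P) tb (a, j) (cc, j) ↔ P a jj < P cc jj) := by
    intro tb a cc j jj ha hak hc hck' hj1 hj2
    have hPiff : P a jj < P cc jj ↔ a < cc := by
      constructor
      · intro h
        by_contra hcon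
        have := hPmonole jj cc a hj1 hj2 hc (by omega) hak
        omega
      · intro h
        exact hPmono jj a cc hj1 hj2 ha h hck'
    rw [hPiff]
    constructor
    · rintro (h | ⟨_, h⟩)
      · rw [hkeyval, hkeyval] at h
        simp only at h
        have hxx : xx k b c P a < xx k b c P cc := by linarith
        exact (hxiff a cc hak hck').mp hxx
      · exact absurd h (lt_irrefl _)
    · intro h
      left
      rw [hkeyval, hkeyval]
      have := (hxiff a cc hak hck').mpr h
      simp only
      linarith
  have hmain : ∀ tb : ℕ → ℕ,
      (∀ j j', 1 ≤ j → j ≤ n → 1 ≤ j' → j' ≤ n → tb j = tb j' → j = j') →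
      IsFilling n k (fun i j => rk k n (keyF k b c P) tb (i, j)) ∧
      (∀ i, 1 ≤ i → i ≤ n - 1 →
        MatchAt 2 k P (fun i j => rk k n (keyF k b c P) tb (i, j)) i) := by
    intro tb htb
    have htri' := htri tb htb
    constructor
    · refine ⟨?_, ?_, ?_⟩
      · intro i j h
        simp only at h
        unfold rk at h
        by_cases hm : (i, j) ∈ grid k n
        · rw [grid, Finset.mem_product, Finset.mem_Icc, Finset.mem_Icc] at hm
          exact ⟨hm.1.1, hm.1.2, hm.2.1, hm.2.2⟩
        · rw [if_neg hm] at h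
          exact absurd rfl h
      · have hcoe : (↑(grid k n) : Set (ℕ × ℕ)) = Set.Icc 1 k ×ˢ Set.Icc 1 n := by
          rw [grid, Finset.coe_product, Finset.coe_Icc, Finset.coe_Icc]
        have hbij := rk_bijOn (k := k) (n := n) (key := keyF k b c P) (tb := tb) htri'
        rw [hcoe] at hbij
        exact hbij
      · intro i j hi1 hik hj1 hjn
        have hm1 := hmemgrid i j hi1 (by omega) hj1 hjn
        have hm2 := hmemgrid (i+1) j (by omega) hik hj1 hjn
        exact rk_lt hm1 hm2 (Or.inl (by
          rw [hkeyval, hkeyval]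
          have := hxmono i (i+1) (by omega) hik
          simp only
          linarith))
    · intro i hi1 hin
      intro a bb cc d ha1 hak hbb1 hbb2 hc1' hck' hd1 hd2
      have hj1n : 1 ≤ i - 1 + bb ∧ i - 1 + bb ≤ n := by omega
      have hj2n : 1 ≤ i - 1 + d ∧ i - 1 + d ≤ n := by omega
      have hm1 := hmemgrid a (i - 1 + bb) ha1 hak hj1n.1 hj1n.2
      have hm2 := hmemgrid cc (i - 1 + d) hc1' hck' hj2n.1 hj2n.2
      show rk k n (keyF k b c P) tb (a, i - 1 + bb) < rk k n (keyF k b c P) tb (cc, i - 1 + d)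
        ↔ P a bb < P cc d
      rw [rk_lt_iff htri' hm1 hm2]
      have hbb : bb = 1 ∨ bb = 2 := by omega
      have hd : d = 1 ∨ d = 2 := by omega
      rcases hbb with rfl | rfl <;> rcases hd with rfl | rfl
      · exact hkey00 tb a cc (i-1+1) 1 ha1 hak hc1' hck' (by omega) (by omega)
      · have e2 : i - 1 + 2 = (i - 1 + 1) + 1 := by omega
        rw [e2]
        exact hkey12 tb a cc (i-1+1) ha1 hak hc1' hck'
      · have e2 : i - 1 + 2 = (i - 1 + 1) + 1 := by omega
        rw [e2]
        exact hkey21 tb a cc (i-1+1) ha1 hak hc1' hck'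
      · exact hkey00 tb a cc (i-1+2) 2 ha1 hak hc1' hck' (by omega) (by omega)
  obtain ⟨hfill1, hmatch1⟩ := hmain (fun j => j) (fun j j' _ _ _ _ h => h)
  obtain ⟨hfill2, hmatch2⟩ := hmain (fun j => n - j) (by
    intro j j' h1 h2 h3 h4 h
    have h' : n - j = n - j' := h
    omega)
  -- the two fillings differ at cells (b,1) and (c,3)
  have hmb1 := hmemgrid b 1 hb1 hbk (by omega) (by omega)
  have hmc3 := hmemgrid c 3 hc1 hck (by omega) hn
  have hkeyeq : keyF k b c P (b, 1) = keyF k b c P (c, 3) := by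
    rw [hkeyval, hkeyval]
    simp only
    rw [hxb]
    push_cast
    ring
  have hr1 : rk k n (keyF k b c P) (fun j => j) (b, 1) <
      rk k n (keyF k b c P) (fun j => j) (c, 3) :=
    rk_lt hmb1 hmc3 (Or.inr ⟨hkeyeq, show (1:ℕ) < 3 by omega⟩)
  have hr2 : rk k n (keyF k b c P) (fun j => n - j) (c, 3) <
      rk k n (keyF k b c P) (fun j => n - j) (b, 1) :=
    rk_lt hmc3 hmb1 (Or.inr ⟨hkeyeq.symm, show n - 3 < n - 1 by omega⟩)
  have hfneq : (fun i j => rk k n (keyF k b c P) (fun j => j) (i, j)) ≠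
      (fun i j => rk k n (keyF k b c P) (fun j => n - j) (i, j)) := by
    intro hcon
    have e1 := congrFun (congrFun hcon b) 1
    have e2 := congrFun (congrFun hcon c) 3
    try simp only at e1 e2
    omega
  -- assemble the two elements of the subtype
  let el1 : {F : ℕ → ℕ → ℕ // IsFilling n k F ∧
      ∀ i, 1 ≤ i → i ≤ n - 1 → ∃ P' ∈ ({P} : Set (ℕ → ℕ → ℕ)), MatchAt 2 k P' F i} :=
    ⟨fun i j => rk k n (keyF k b c P) (fun j => j) (i, j), hfill1,
      fun i h1 h2 => ⟨P, rfl, hmatch1 i h1 h2⟩⟩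
  let el2 : {F : ℕ → ℕ → ℕ // IsFilling n k F ∧
      ∀ i, 1 ≤ i → i ≤ n - 1 → ∃ P' ∈ ({P} : Set (ℕ → ℕ → ℕ)), MatchAt 2 k P' F i} :=
    ⟨fun i j => rk k n (keyF k b c P) (fun j => n - j) (i, j), hfill2,
      fun i h1 h2 => ⟨P, rfl, hmatch2 i h1 h2⟩⟩
  have hne12 : el1 ≠ el2 := fun hcon => hfneq (congrArg Subtype.val hcon)
  -- finiteness of the subtype
  have hbound : ∀ (G : {F : ℕ → ℕ → ℕ // IsFilling n k F ∧
      ∀ i, 1 ≤ i → i ≤ n - 1 → ∃ P' ∈ ({P} : Set (ℕ → ℕ → ℕ)), MatchAt 2 k P' F i})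
      (i j : ℕ), G.1 i j ≤ k * n := by
    intro G i j
    by_cases h : G.1 i j = 0
    · omega
    · have hr := G.2.1.1 i j h
      have hm : ((i, j) : ℕ × ℕ) ∈ Set.Icc 1 k ×ˢ Set.Icc 1 n :=
        Set.mem_prod.mpr ⟨Set.mem_Icc.mpr ⟨hr.1, hr.2.1⟩, Set.mem_Icc.mpr ⟨hr.2.2.1, hr.2.2.2⟩⟩
      exact (Set.mem_Icc.mp (G.2.1.2.1.mapsTo hm)).2
  have hfinT : Finite {F : ℕ → ℕ → ℕ // IsFilling n k F ∧
      ∀ i, 1 ≤ i → i ≤ n - 1 → ∃ P' ∈ ({P} : Set (ℕ → ℕ → ℕ)), MatchAt 2 k P' F i} := by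
    apply Finite.of_injective (fun G => (fun p : Fin (k+1) × Fin (n+1) =>
      (⟨G.1 p.1 p.2, Nat.lt_succ_of_le (hbound G p.1 p.2)⟩ : Fin (k * n + 1))))
    intro G1 G2 h
    apply Subtype.ext
    funext i j
    by_cases hik : i ≤ k ∧ j ≤ n
    · have := congrFun h (⟨i, by omega⟩, ⟨j, by omega⟩)
      simpa using congrArg Fin.val this
    · have h1 : G1.1 i j = 0 := by
        by_contra hne
        have := G1.2.1.1 i j hne
        omega
      have h2 : G2.1 i j = 0 := by
        by_contra hne
        have := G2.2.1.1 i j hne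
        omega
      rw [h1, h2]
  haveI := hfinT
  -- conclude
  have hinj : Function.Injective (fun bl : Bool => cond bl el1 el2) := by
    intro b1 b2 h
    cases b1 <;> cases b2
    · rfl
    · exact absurd h.symm hne12
    · exact absurd h hne12
    · rfl
  have hcard := Nat.card_le_card_of_injective _ hinj
  have hBool : Nat.card Bool = 2 := by simp [Nat.card_eq_fintype_card]
  unfold fullCount
  omega
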